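/- Let ε ∈ (0,1/2], k ≥ 1, let 𝒲 be a family of channels from [2k] to finite alphabets, and let (Π, p̂) be an (n, ε/12)-estimator using 𝒲 with transcript (Y^n, U). Let Z be uniform on {−1,+1}^k and, conditionally on Z, let the n inputs be i.i.d. with law p_Z. Then Σ_{i=1}^k I(Z_i; Y^n | U) ≥ k/2, where mutual information is measured in bits. -/

import Mathlib

open Finset

namespace Paper

/-- A probability distribution on a finite type, given by its mass function. -/
def IsDist {α : Type*} [Fintype α] (p : α → ℝ) : Prop :=
  (∀ a, 0 ≤ p a) ∧ ∑ a, p a = 1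

/-- A channel (row-stochastic kernel) from `α` to the finite alphabet `𝒴`. -/
def IsChannel {α 𝒴 : Type*} [Fintype α] [Fintype 𝒴] (W : α → 𝒴 → ℝ) : Prop :=
  ∀ x, IsDist (W x)

/-- Total variation distance between mass functions on a finite type. -/
noncomputable def tvDist {α : Type*} [Fintype α] (p q : α → ℝ) : ℝ :=
  (∑ a, |p a - q a|) / 2

/-- The element `2i-1` (1-indexed) of `[2k]`, i.e. index `2i` in 0-indexed terms. -/
def lo {k : ℕ} (i : Fin k) : Fin (2 * k) := ⟨2 * i.val, by have := i.isLt; omega⟩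

/-- The element `2i` (1-indexed) of `[2k]`, i.e. index `2i+1` in 0-indexed terms. -/
def hi {k : ℕ} (i : Fin k) : Fin (2 * k) := ⟨2 * i.val + 1, by have := i.isLt; omega⟩

/-- The channel information matrix `H(W)`  (division by `0` yields `0` in Lean,
matching the convention that terms with zero denominator vanish). -/
noncomputable def HMat (k : ℕ) {𝒴 : Type*} [Fintype 𝒴] (W : Fin (2 * k) → 𝒴 → ℝ) :
    Matrix (Fin k) (Fin k) ℝ := fun i j =>
  ∑ y, (W (lo i) y - W (hi i) y) * (W (lo j) y - W (hi j) y) / (∑ x, W x y)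

/-- Nuclear norm of a real symmetric matrix (sum of absolute values of eigenvalues). -/
noncomputable def nucNorm {k : ℕ} (A : Matrix (Fin k) (Fin k) ℝ) : ℝ :=
  if h : A.IsHermitian then ∑ i, |h.eigenvalues i| else 0

/-- Operator (spectral) norm of a real symmetric matrix. -/
noncomputable def opNorm {k : ℕ} (A : Matrix (Fin k) (Fin k) ℝ) : ℝ :=
  if h : A.IsHermitian then ⨆ i, |h.eigenvalues i| else 0

/-- Frobenius norm of a matrix. -/
noncomputable def frobNorm {k : ℕ} (A : Matrix (Fin k) (Fin k) ℝ) : ℝ :=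
  Real.sqrt (∑ i, ∑ j, (A i j) ^ 2)

/-- `‖𝒲‖_*`, the maximal nuclear norm of `H(W)` over the family. -/
noncomputable def famNuc (k : ℕ) {𝒴 : Type*} [Fintype 𝒴]
    (𝒲 : Set (Fin (2 * k) → 𝒴 → ℝ)) : ℝ :=
  sSup ((fun W => nucNorm (HMat k W)) '' 𝒲)

/-- `‖𝒲‖_op`, the maximal operator norm of `H(W)` over the family. -/
noncomputable def famOp (k : ℕ) {𝒴 : Type*} [Fintype 𝒴]
    (𝒲 : Set (Fin (2 * k) → 𝒴 → ℝ)) : ℝ :=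
  sSup ((fun W => opNorm (HMat k W)) '' 𝒲)

/-- `‖𝒲‖_F`, the maximal Frobenius norm of `H(W)` over the family. -/
noncomputable def famFrob (k : ℕ) {𝒴 : Type*} [Fintype 𝒴]
    (𝒲 : Set (Fin (2 * k) → 𝒴 → ℝ)) : ℝ :=
  sSup ((fun W => frobNorm (HMat k W)) '' 𝒲)

/-- A deterministic sequentially interactive protocol over `n` users: to each user `t`
and each message prefix it assigns a channel. -/
def Protocol (k n : ℕ) (𝒴 : Type*) : Type _ :=
  (t : Fin n) → (Fin t.val → 𝒴) → Fin (2 * k) → 𝒴 → ℝ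

/-- All channels used by the protocol belong to the family `𝒲`. -/
def UsesFamily {k n : ℕ} {𝒴 : Type*} (π : Protocol k n 𝒴)
    (𝒲 : Set (Fin (2 * k) → 𝒴 → ℝ)) : Prop :=
  ∀ t pre, π t pre ∈ 𝒲

/-- All kernels used by the protocol are genuine channels. -/
def ChannelProtocol {k n : ℕ} {𝒴 : Type*} [Fintype 𝒴] (π : Protocol k n 𝒴) : Prop :=
  ∀ t pre, IsChannel (π t pre)

/-- Distribution of the first `t` messages of the transcript when the inputs are
i.i.d. with law `p`. -/
noncomputable def prefixDist {k n : ℕ} {𝒴 : Type*} [Fintype 𝒴] (π : Protocol k n 𝒴)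
    (p : Fin (2 * k) → ℝ) (t : ℕ) (ht : t ≤ n) (y : Fin t → 𝒴) : ℝ :=
  ∏ s : Fin t, ∑ x, p x *
    π ⟨s.val, lt_of_lt_of_le s.isLt ht⟩ (fun r => y ⟨r.val, lt_trans r.isLt s.isLt⟩) x (y s)

/-- Distribution of the full transcript `Y^n` when the inputs are i.i.d. with law `p`. -/
noncomputable def transDist {k n : ℕ} {𝒴 : Type*} [Fintype 𝒴] (π : Protocol k n 𝒴)
    (p : Fin (2 * k) → ℝ) (y : Fin n → 𝒴) : ℝ :=
  prefixDist π p n le_rfl y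

/-- The uniform distribution on `[2k]`. -/
noncomputable def uniform2k (k : ℕ) : Fin (2 * k) → ℝ := fun _ => (2 * (k : ℝ))⁻¹

/-- An `(n, ε)`-estimator using `𝒲`: a public-coin sequentially interactive protocol
(seed distribution `μ`, protocols `π u`, channels from `𝒲`) together with an estimator
`est` such that, for every input distribution `p`, the probability that the estimate is
more than `ε` away from `p` in total variation is at most `1/100`. -/
def IsEstimator {k n : ℕ} {𝒴 𝒰 : Type*} [Fintype 𝒴] [Fintype 𝒰]
    (𝒲 : Set (Fin (2 * k) → 𝒴 → ℝ)) (μ : 𝒰 → ℝ) (π : 𝒰 → Protocol k n 𝒴)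
    (est : (Fin n → 𝒴) → 𝒰 → Fin (2 * k) → ℝ) (ε : ℝ) : Prop :=
  IsDist μ ∧ (∀ u, UsesFamily (π u) 𝒲) ∧ (∀ u, ChannelProtocol (π u)) ∧
  (∀ y u, IsDist (est y u)) ∧
  ∀ p : Fin (2 * k) → ℝ, IsDist p →
    (∑ u, ∑ y : Fin n → 𝒴, μ u * (transDist (π u) p y *
      (if ε < tvDist (est y u) p then (1 : ℝ) else 0))) ≤ 1 / 100

/-- An `(n, ε)`-uniformity test using `𝒲`: a public-coin sequentially interactive
protocol together with a randomized decision rule `T` (probability of output `1`)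
accepting uniform and rejecting `ε`-far distributions with probability `99/100`. -/
def IsUnifTest {k n : ℕ} {𝒴 𝒰 : Type*} [Fintype 𝒴] [Fintype 𝒰]
    (𝒲 : Set (Fin (2 * k) → 𝒴 → ℝ)) (μ : 𝒰 → ℝ) (π : 𝒰 → Protocol k n 𝒴)
    (T : (Fin n → 𝒴) → 𝒰 → ℝ) (ε : ℝ) : Prop :=
  IsDist μ ∧ (∀ u, UsesFamily (π u) 𝒲) ∧ (∀ u, ChannelProtocol (π u)) ∧
  (∀ y u, T y u ∈ Set.Icc (0 : ℝ) 1) ∧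
  (99 / 100 ≤ ∑ u, ∑ y : Fin n → 𝒴, μ u * (transDist (π u) (uniform2k k) y * (1 - T y u))) ∧
  ∀ p : Fin (2 * k) → ℝ, IsDist p → ε ≤ tvDist p (uniform2k k) →
    99 / 100 ≤ ∑ u, ∑ y : Fin n → 𝒴, μ u * (transDist (π u) p y * T y u)

/-- Mutual information (in nats) of a joint mass function on `A × B`. -/
noncomputable def miNats {A B : Type*} [Fintype A] [Fintype B] (j : A → B → ℝ) : ℝ :=
  ∑ a, ∑ b, j a b * Real.log (j a b / ((∑ b', j a b') * (∑ a', j a' b)))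

/-- Mutual information (in bits) of a joint mass function on `A × B`. -/
noncomputable def miBits {A B : Type*} [Fintype A] [Fintype B] (j : A → B → ℝ) : ℝ :=
  ∑ a, ∑ b, j a b * Real.logb 2 (j a b / ((∑ b', j a b') * (∑ a', j a' b)))

/-- Binary entropy function (in bits). -/
noncomputable def binEnt (t : ℝ) : ℝ :=
  -(t * Real.logb 2 t) - (1 - t) * Real.logb 2 (1 - t)

/-- `±1` encoding of a Boolean. -/
def pm (b : Bool) : ℝ := if b then 1 else -1

/-- The joint mass function of `(Z_i, Y)` obtained from a joint mass function of `(Z, Y)`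
for `Z ∈ {−1,+1}^k` (encoded via Booleans). -/
noncomputable def coordJoint {k : ℕ} {𝒴 : Type*} [Fintype 𝒴]
    (j : (Fin k → Bool) → 𝒴 → ℝ) (i : Fin k) : Bool → 𝒴 → ℝ :=
  fun b y => ∑ z : Fin k → Bool, if z i = b then j z y else 0

/-- The Paninski perturbation `p_z` of the uniform distribution on `[2k]`:
`p_z(2i−1) = (1+2ε z_i)/(2k)` and `p_z(2i) = (1−2ε z_i)/(2k)` (1-indexed). -/
noncomputable def paninski (k : ℕ) (ε : ℝ) (z : Fin k → Bool) : Fin (2 * k) → ℝ :=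
  fun x => (1 + (if x.val % 2 = 0 then (1 : ℝ) else -1) * (2 * ε) *
    pm (z ⟨x.val / 2, by have := x.isLt; omega⟩)) / (2 * k)

/-- Chi-square divergence between mass functions on a finite type. -/
noncomputable def chiSq {α : Type*} [Fintype α] (P Q : α → ℝ) : ℝ :=
  ∑ y, (P y - Q y) ^ 2 / Q y

/-- Kullback–Leibler divergence (in nats) between mass functions on a finite type. -/
noncomputable def klDivNats {α : Type*} [Fintype α] (P Q : α → ℝ) : ℝ :=
  ∑ y, P y * Real.log (P y / Q y)

/-- The leaky-query channel `W_u^η` on output alphabet `[2k] ∪ {1*, 0*}`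
(`Sum.inr true = 1*`, `Sum.inr false = 0*`). -/
noncomputable def leaky (k : ℕ) (η : ℝ) (u : Fin (2 * k) → ℝ) :
    Fin (2 * k) → (Fin (2 * k) ⊕ Bool) → ℝ :=
  fun x y => Sum.elim (fun x' => if x' = x then η else 0)
    (fun b => if b then (1 - η) * u x else (1 - η) * (1 - u x)) y

/-- The vector `δ(u)` associated with a leaky-query channel. -/
noncomputable def leakyDelta (k : ℕ) (u : Fin (2 * k) → ℝ) : Fin k → ℝ :=
  fun i => (u (lo i) - u (hi i)) *
    Real.sqrt ((2 * (k : ℝ)) / ((∑ x, u x) * (2 * (k : ℝ) - ∑ x, u x)))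

/-- The partial-erasure channel `W_{x*}` on output alphabet `[2k] ∪ {⊥}`. -/
noncomputable def eraseCh (k : ℕ) (η : ℝ) (xs : Fin (2 * k)) :
    Fin (2 * k) → (Fin (2 * k) ⊕ Unit) → ℝ :=
  fun x y => Sum.elim (fun x' => if x' = x then (if x = xs then 1 else η) else 0)
    (fun _ => if x = xs then 0 else 1 - η) y

/-- The family of all `ρ`-locally differentially private channels from `[2k]` to `𝒴`. -/
def ldpFamily (k : ℕ) {𝒴 : Type*} [Fintype 𝒴] (ρ : ℝ) :
    Set (Fin (2 * k) → 𝒴 → ℝ) :=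
  { W | IsChannel W ∧ ∀ x x' y, W x y ≤ Real.exp ρ * W x' y }


section Aux
open Finset

/-! ### auxiliary lemmas -/

lemma binEnt_eq (t : ℝ) : binEnt t = Real.binEntropy t / Real.log 2 := by
  rw [binEnt, Real.binEntropy, Real.logb, Real.logb, Real.log_inv, Real.log_inv]
  ring

lemma binEnt_concave : ConcaveOn ℝ (Set.Icc (0:ℝ) 1) binEnt := by
  have h := Real.strictConcave_binEntropy.concaveOn
  have h2 := h.smul (c := (Real.log 2)⁻¹) (by positivity)
  have hfun : binEnt = fun x => (Real.log 2)⁻¹ • Real.binEntropy x := by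
    funext t
    rw [binEnt_eq]
    simp [smul_eq_mul, div_eq_inv_mul]
  rw [hfun]
  exact h2

lemma binEnt_mono {a b : ℝ} (ha : 0 ≤ a) (hab : a ≤ b) (hb : b ≤ 1/2) :
    binEnt a ≤ binEnt b := by
  rw [binEnt_eq, binEnt_eq]
  have hlog : (0:ℝ) < Real.log 2 := Real.log_pos (by norm_num)
  gcongr
  exact Real.binEntropy_strictMonoOn.monotoneOn
      ⟨ha, by norm_num; linarith⟩ ⟨by linarith, by norm_num; linarith⟩ hab

lemma binEnt_7_75 : binEnt (7/75) ≤ 1/2 := by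
  rw [binEnt_eq]
  have hlog : (0:ℝ) < Real.log 2 := Real.log_pos (by norm_num)
  rw [div_le_iff₀ hlog]
  have h1 : Real.log (75/68 : ℝ) ≤ 7/68 := by
    have := Real.log_le_sub_one_of_pos (show (0:ℝ) < 75/68 by norm_num); linarith
  have h2 : Real.log (75/56 : ℝ) ≤ 19/56 := by
    have := Real.log_le_sub_one_of_pos (show (0:ℝ) < 75/56 by norm_num); linarith
  have h3 : Real.log (75/7 : ℝ) = 3 * Real.log 2 + Real.log (75/56) := by
    rw [show (75/7 : ℝ) = 2^3 * (75/56) by norm_num, Real.log_mul (by norm_num) (by norm_num),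
      Real.log_pow]
    push_cast; ring
  have hB : Real.binEntropy (7/75) = (7/75) * Real.log (75/7) + (68/75) * Real.log (75/68) := by
    rw [Real.binEntropy, show ((7:ℝ)/75)⁻¹ = 75/7 by norm_num,
      show (1:ℝ) - 7/75 = 68/75 by norm_num, show ((68:ℝ)/75)⁻¹ = 75/68 by norm_num]
  have hL := Real.log_two_gt_d9
  rw [hB, h3]
  nlinarith

lemma binEnt_one_sub (t : ℝ) : binEnt (1 - t) = binEnt t := by
  rw [binEnt_eq, binEnt_eq, Real.binEntropy_one_sub]

/-- Per-`y` decomposition of the mutual-information summand. -/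
lemma mi_term (jt jf q : ℝ) (hq : q = jt + jf) (ht : 0 ≤ jt) (hf : 0 ≤ jf) :
    jt * Real.logb 2 (jt / (2⁻¹ * q)) + jf * Real.logb 2 (jf / (2⁻¹ * q))
      = q - q * binEnt (jt / q) := by
  rcases eq_or_lt_of_le (by linarith : (0:ℝ) ≤ q) with hq0 | hq0
  · have h1 : jt = 0 := by linarith
    have h2 : jf = 0 := by linarith
    simp [h1, h2, ← hq0]
  · have hqne : q ≠ 0 := ne_of_gt hq0
    have key : ∀ u : ℝ, 0 ≤ u → u * Real.logb 2 (u / (2⁻¹ * q)) =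
        u + u * Real.logb 2 (u / q) := by
      intro u hu
      rcases eq_or_lt_of_le hu with h | h
      · simp [← h]
      · have harg : u / (2⁻¹ * q) = 2 * (u / q) := by field_simp
        rw [harg, Real.logb_mul (by norm_num) (by positivity)]
        rw [Real.logb_self_eq_one (by norm_num)]
        ring
    rw [key jt ht, key jf hf]
    have hr : jf / q = 1 - jt / q := by field_simp; linarith
    obtain ⟨r, hjt, hjf⟩ : ∃ r, jt = q * r ∧ jf = q * (1 - r) :=
      ⟨jt / q, by field_simp, by rw [← hr]; field_simp⟩
    rw [hjt, hjf, binEnt]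
    have hc : q * r / q = r := by field_simp
    have hc2 : q * (1 - r) / q = 1 - r := by field_simp
    rw [hc, hc2]
    ring

/-- Fano-type inequality for a binary source with uniform marginal. -/
lemma fano {B : Type*} [Fintype B] (j : Bool → B → ℝ) (g : B → Bool)
    (hnn : ∀ b y, 0 ≤ j b y) (hmarg : ∀ b, ∑ y, j b y = 1/2) :
    1 - binEnt (∑ y, j (!(g y)) y) ≤ miBits j := by
  classical
  set q : B → ℝ := fun y => j true y + j false y with hq
  have hqnn : ∀ y, 0 ≤ q y := fun y => add_nonneg (hnn _ _) (hnn _ _)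
  have hqsum : ∑ y, q y = 1 := by
    rw [hq, Finset.sum_add_distrib, hmarg, hmarg]; norm_num
  -- the error probability given message y
  set e : B → ℝ := fun y => j (!(g y)) y / q y with he
  have hj_le_q : ∀ b y, j b y ≤ q y := by
    intro b y
    cases b
    · exact le_add_of_nonneg_left (hnn _ _)
    · exact le_add_of_nonneg_right (hnn _ _)
  have hemem : ∀ y, e y ∈ Set.Icc (0:ℝ) 1 := by
    intro y
    constructor
    · exact div_nonneg (hnn _ _) (hqnn _)
    · rcases eq_or_lt_of_le (hqnn y) with h0 | h0
      · simp [he, ← h0]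
      · exact div_le_one_of_le₀ (hj_le_q _ _) (le_of_lt h0)
  -- Step A : mutual information identity
  have hA : miBits j = 1 - ∑ y, q y * binEnt (j true y / q y) := by
    rw [miBits, Fintype.sum_bool, ← Finset.sum_add_distrib]
    have hterm : ∀ y, j true y * Real.logb 2 (j true y / ((∑ y', j true y') * (∑ a', j a' y)))
        + j false y * Real.logb 2 (j false y / ((∑ y', j false y') * (∑ a', j a' y)))
        = q y - q y * binEnt (j true y / q y) := by
      intro y
      have hsb : (∑ a', j a' y) = q y := by rw [Fintype.sum_bool]
      rw [hmarg, hmarg, hsb, show (1:ℝ)/2 = 2⁻¹ by norm_num]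
      exact mi_term (j true y) (j false y) (q y) rfl (hnn _ _) (hnn _ _)
    rw [Finset.sum_congr rfl (fun y _ => hterm y), Finset.sum_sub_distrib, hqsum]
  -- Step B : replace by error probability
  have hB : ∀ y, q y * binEnt (j true y / q y) = q y * binEnt (e y) := by
    intro y
    rcases eq_or_lt_of_le (hqnn y) with h0 | h0
    · rw [← h0]; ring
    · cases hg : g y
      · simp [he, hg]
      · have h1 : e y = 1 - j true y / q y := by
          have h2 : e y = j false y / q y := by
            show j (!(g y)) y / q y = _
            rw [hg]
            simp
          rw [h2, eq_sub_iff_add_eq, ← add_div, add_comm]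
          exact div_self (ne_of_gt h0)
        rw [h1, binEnt_one_sub]
  -- Step C : Jensen
  have hC : ∑ y, q y * binEnt (e y) ≤ binEnt (∑ y, q y * e y) := by
    have := binEnt_concave.le_map_sum (t := Finset.univ) (w := q) (p := e)
      (fun y _ => hqnn y) hqsum (fun y _ => hemem y)
    simpa [smul_eq_mul] using this
  -- Step D : mean error
  have hD : ∑ y, q y * e y = ∑ y, j (!(g y)) y := by
    apply Finset.sum_congr rfl
    intro y _
    rcases eq_or_lt_of_le (hqnn y) with h0 | h0
    · have hj0 : j (!(g y)) y = 0 :=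
        le_antisymm (le_of_le_of_eq (hj_le_q _ y) h0.symm) (hnn _ _)
      rw [hj0, ← h0]; simp
    · rw [he]; field_simp
  rw [hA, Finset.sum_congr rfl (fun y _ => hB y)]
  have := hD ▸ hC
  linarith

variable {k n : ℕ} {𝒴 : Type*} [Fintype 𝒴]

lemma prefixDist_nonneg (π : Protocol k n 𝒴) (hπ : ChannelProtocol π)
    {p : Fin (2 * k) → ℝ} (hp : IsDist p) (t : ℕ) (ht : t ≤ n) (y : Fin t → 𝒴) :
    0 ≤ prefixDist π p t ht y := by
  apply Finset.prod_nonneg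
  intro s _
  apply Finset.sum_nonneg
  intro x _
  exact mul_nonneg (hp.1 x) ((hπ _ _ x).1 _)

lemma prefixDist_snoc (π : Protocol k n 𝒴) (p : Fin (2 * k) → ℝ) (t : ℕ) (ht : t + 1 ≤ n)
    (y : Fin t → 𝒴) (a : 𝒴) :
    prefixDist π p (t+1) ht (Fin.snoc y a) =
      prefixDist π p t (by omega) y *
        ∑ x, p x * π ⟨t, ht⟩ (fun r => y ⟨r.val, r.isLt⟩) x a := by
  unfold prefixDist
  rw [Fin.prod_univ_castSucc]
  congr 1
  · apply Finset.prod_congr rfl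
    intro s _
    apply Finset.sum_congr rfl
    intro x _
    congr 1 <;> try simp [Fin.snoc, Fin.castLT]
    exact congrArg (fun pre => π _ pre x (y s)) (by
      funext r
      simp [lt_trans r.isLt s.isLt])
  · apply Finset.sum_congr rfl
    intro x _
    congr 1 <;> simp [Fin.snoc, Fin.castLT]

lemma prefixDist_sum (π : Protocol k n 𝒴) (hπ : ChannelProtocol π)
    {p : Fin (2 * k) → ℝ} (hp : IsDist p) (t : ℕ) (ht : t ≤ n) :
    ∑ y : Fin t → 𝒴, prefixDist π p t ht y = 1 := by
  induction t with
  | zero =>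
    rw [Fintype.sum_unique]
    simp [prefixDist]
  | succ t ih =>
    rw [← Fintype.sum_equiv (Fin.snocEquiv (fun _ => 𝒴))
      (fun ay : 𝒴 × (Fin t → 𝒴) => prefixDist π p (t+1) ht (Fin.snoc ay.2 ay.1))
      (prefixDist π p (t+1) ht)
      (fun ay => by simp [Fin.snocEquiv])]
    rw [Fintype.sum_prod_type_right]
    calc ∑ y : Fin t → 𝒴, ∑ a : 𝒴, prefixDist π p (t+1) ht (Fin.snoc y a)
        = ∑ y : Fin t → 𝒴, prefixDist π p t (by omega) y := by
          apply Finset.sum_congr rfl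
          intro y _
          have : ∀ a, prefixDist π p (t+1) ht (Fin.snoc y a) =
              prefixDist π p t (by omega) y *
              ∑ x, p x * π ⟨t, ht⟩ (fun r => y ⟨r.val, r.isLt⟩) x a :=
            fun a => prefixDist_snoc π p t ht y a
          rw [Finset.sum_congr rfl (fun a _ => this a), ← Finset.mul_sum,
            Finset.sum_comm]
          have h1 : ∑ x, ∑ a, p x * π ⟨t, ht⟩ (fun r => y ⟨r.val, r.isLt⟩) x a = 1 := by
            have : ∀ x, ∑ a, p x * π ⟨t, ht⟩ (fun r => y ⟨r.val, r.isLt⟩) x a = p x := by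
              intro x
              rw [← Finset.mul_sum, (hπ ⟨t, ht⟩ _ x).2, mul_one]
            rw [Finset.sum_congr rfl (fun x _ => this x), hp.2]
          rw [h1, mul_one]
      _ = 1 := ih (by omega)

lemma transDist_nonneg (π : Protocol k n 𝒴) (hπ : ChannelProtocol π)
    {p : Fin (2 * k) → ℝ} (hp : IsDist p) (y : Fin n → 𝒴) : 0 ≤ transDist π p y :=
  prefixDist_nonneg π hπ hp n le_rfl y

lemma transDist_sum (π : Protocol k n 𝒴) (hπ : ChannelProtocol π)
    {p : Fin (2 * k) → ℝ} (hp : IsDist p) : ∑ y : Fin n → 𝒴, transDist π p y = 1 :=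
  prefixDist_sum π hπ hp n le_rfl

/-- Pairing equivalence `Fin k × Bool ≃ Fin (2k)`. -/
def pairEquiv (k : ℕ) : Fin k × Bool ≃ Fin (2 * k) where
  toFun ib := if ib.2 then hi ib.1 else lo ib.1
  invFun x := (⟨x.val / 2, by have := x.isLt; omega⟩, decide (x.val % 2 = 1))
  left_inv := by
    rintro ⟨i, b⟩
    cases b <;> simp [lo, hi] <;>
      exact Fin.ext (by show (2 * i.val + 1) / 2 = i.val; omega)
  right_inv := by
    intro x
    by_cases h : x.val % 2 = 1 <;> simp [h, lo, hi] <;> exact Fin.ext (by simp; omega)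

lemma sum_pairs {k : ℕ} (f : Fin (2 * k) → ℝ) :
    ∑ x, f x = ∑ i : Fin k, (f (lo i) + f (hi i)) := by
  rw [← Fintype.sum_equiv (pairEquiv k) (fun ib => f (pairEquiv k ib)) f (fun _ => rfl),
    Fintype.sum_prod_type]
  apply Finset.sum_congr rfl
  intro i _
  rw [Fintype.sum_bool]
  simp [pairEquiv, add_comm]

lemma paninski_lo {k : ℕ} (ε : ℝ) (z : Fin k → Bool) (i : Fin k) :
    paninski k ε z (lo i) = (1 + 2 * ε * pm (z i)) / (2 * k) := by
  have h2 : (2 * i.val) % 2 = 0 := by omega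
  have h3 : (2 * i.val) / 2 = i.val := by omega
  simp only [paninski, lo, h2, h3, if_pos]
  norm_num

lemma paninski_hi {k : ℕ} (ε : ℝ) (z : Fin k → Bool) (i : Fin k) :
    paninski k ε z (hi i) = (1 - 2 * ε * pm (z i)) / (2 * k) := by
  have h2 : ¬((2 * i.val + 1) % 2 = 0) := by omega
  have h3 : (2 * i.val + 1) / 2 = i.val := by omega
  simp only [paninski, hi, h2, h3, if_neg, if_false]
  norm_num
  ring_nf

lemma pm_abs (b : Bool) : |pm b| = 1 := by cases b <;> simp [pm]

lemma paninski_isDist {k : ℕ} (hk : 1 ≤ k) {ε : ℝ} (hε : 0 < ε) (hε' : ε ≤ 1/2)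
    (z : Fin k → Bool) : IsDist (paninski k ε z) := by
  have hknn : (0:ℝ) < 2 * k := by positivity
  constructor
  · intro x
    apply div_nonneg _ (le_of_lt hknn)
    have h1 : |(if x.val % 2 = 0 then (1 : ℝ) else -1) * (2 * ε) * pm (z ⟨x.val / 2, by have := x.isLt; omega⟩)| ≤ 1 := by
      rw [abs_mul, abs_mul, pm_abs]
      have : |(if x.val % 2 = 0 then (1 : ℝ) else -1)| = 1 := by split <;> simp
      rw [this]
      rw [abs_of_nonneg (by linarith : (0:ℝ) ≤ 2 * ε)]
      linarith
    have := abs_le.mp h1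
    linarith [this.1]
  · rw [sum_pairs]
    have : ∀ i : Fin k, paninski k ε z (lo i) + paninski k ε z (hi i) = (k:ℝ)⁻¹ := by
      intro i
      rw [paninski_lo, paninski_hi]
      have h : ((k:ℝ)) ≠ 0 := Nat.cast_ne_zero.mpr (by omega)
      field_simp
      ring_nf
    rw [Finset.sum_congr rfl (fun i _ => this i), Finset.sum_const, Finset.card_univ,
      Fintype.card_fin, nsmul_eq_mul, mul_inv_cancel₀ (Nat.cast_ne_zero.mpr (by omega))]

/-- Decoding: if the sign guess on coordinate `i` is wrong, the estimate pays `2ε/k`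
in the pair `(lo i, hi i)`. -/
lemma decode_pay {k : ℕ} (hk : 1 ≤ k) {ε : ℝ} (hε : 0 < ε) (ph : Fin (2 * k) → ℝ)
    (z : Fin k → Bool) (i : Fin k)
    (hwrong : (decide (ph (hi i) < ph (lo i))) ≠ z i) :
    2 * ε / k ≤ |ph (lo i) - paninski k ε z (lo i)| + |ph (hi i) - paninski k ε z (hi i)| := by
  have hkpos : (0:ℝ) < k := by exact_mod_cast Nat.pos_of_ne_zero (by omega)
  have hd : paninski k ε z (lo i) - paninski k ε z (hi i) = 2 * ε * pm (z i) / k := by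
    rw [paninski_lo, paninski_hi]; field_simp; ring
  have h1 := le_abs_self (ph (lo i) - paninski k ε z (lo i))
  have h2 := neg_abs_le (ph (lo i) - paninski k ε z (lo i))
  have h3 := le_abs_self (ph (hi i) - paninski k ε z (hi i))
  have h4 := neg_abs_le (ph (hi i) - paninski k ε z (hi i))
  cases hz : z i with
  | true =>
    have hg : ¬ (ph (hi i) < ph (lo i)) := by
      intro hc; rw [hz] at hwrong; simp [hc] at hwrong
    push_neg at hg
    rw [hz] at hd; simp only [pm, if_pos, mul_one] at hd
    linarith
  | false =>
    have hg : ph (hi i) < ph (lo i) := by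
      by_contra hc; rw [hz] at hwrong; simp [hc] at hwrong
    rw [hz] at hd; simp only [pm, Bool.false_eq_true, if_false, mul_neg, mul_one, neg_div] at hd
    linarith


/-- Counting: the number of sign vectors with a fixed coordinate. -/
lemma count_fixed {k : ℕ} (i : Fin k) (b : Bool) :
    ∑ z : Fin k → Bool, (if z i = b then (1:ℝ) else 0) = 2 ^ (k - 1) := by
  classical
  rw [Fintype.sum_equiv (Equiv.piSplitAt i (fun _ => Bool))
    (fun z => if z i = b then (1:ℝ) else 0)
    (fun p => if p.1 = b then (1:ℝ) else 0) (fun z => rfl)]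
  rw [Fintype.sum_prod_type]
  have hcard : Fintype.card ({j : Fin k // j ≠ i} → Bool) = 2 ^ (k - 1) := by
    rw [Fintype.card_fun, Fintype.card_bool]
    congr 1
    have h1 : Fintype.card {j : Fin k // j ≠ i} = k - 1 := by
      have := Fintype.card_subtype_compl (fun j : Fin k => j = i)
      simp [Fintype.card_subtype_eq] at this
      simpa using this
    rw [h1]
  rw [Fintype.sum_bool]
  cases b <;> simp [hcard]

lemma bool_ind (zb gb : Bool) (a : ℝ) :
    (if zb = !gb then a else 0) = a * (if gb ≠ zb then 1 else 0) := by
  cases zb <;> cases gb <;> simp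

lemma two_pow_half {k : ℕ} (hk : 1 ≤ k) : (2:ℝ) ^ (k - 1) * (1 / 2 ^ k) = 1 / 2 := by
  have h : k = (k - 1) + 1 := by omega
  rw [h, pow_succ]
  have h2 : (2:ℝ) ^ (k-1) ≠ 0 := by positivity
  field_simp
  simp
end Aux

/-- Assouad-type bound: if `(Π, est)` is an `(n, ε/12)`-estimator
using `𝒲`, `Z` is uniform on `{−1,+1}^k` and, given `Z`, the inputs are i.i.d. `p_Z`,
then `Σᵢ I(Z_i; Y^n | U) ≥ k/2` (information in bits). -/
theorem assouad_bound
    (k n : ℕ) (hk : 1 ≤ k) (ε : ℝ) (hε : 0 < ε) (hε' : ε ≤ 1 / 2)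
    (𝒴 𝒰 : Type) [Fintype 𝒴] [Fintype 𝒰]
    (𝒲 : Set (Fin (2 * k) → 𝒴 → ℝ)) (h𝒲 : ∀ W ∈ 𝒲, IsChannel W)
    (μ : 𝒰 → ℝ) (π : 𝒰 → Protocol k n 𝒴)
    (est : (Fin n → 𝒴) → 𝒰 → Fin (2 * k) → ℝ)
    (hEst : IsEstimator 𝒲 μ π est (ε / 12)) :
    (k : ℝ) / 2 ≤ ∑ i : Fin k, ∑ u, μ u *
      miBits (coordJoint
        (fun z y => (1 / 2 ^ k : ℝ) * transDist (π u) (paninski k ε z) y) i) := by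
  classical
  obtain ⟨hμ, -, hchan, hestd, hacc⟩ := hEst
  have hk0 : (0:ℝ) < k := by exact_mod_cast Nat.pos_of_ne_zero (by omega)
  set c : ℝ := (1 / 2 ^ k : ℝ) with hc
  have hcnn : 0 ≤ c := by positivity
  have hpan : ∀ z : Fin k → Bool, IsDist (paninski k ε z) :=
    fun z => paninski_isDist hk hε hε' z
  have hQnn : ∀ u z y, 0 ≤ transDist (π u) (paninski k ε z) y := fun u z y =>
    transDist_nonneg (π u) (hchan u) (hpan z) y
  have hQsum : ∀ u z, ∑ y, transDist (π u) (paninski k ε z) y = 1 := fun u z =>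
    transDist_sum (π u) (hchan u) (hpan z)
  set g : Fin k → (Fin n → 𝒴) → 𝒰 → Bool :=
    fun i y u => decide (est y u (hi i) < est y u (lo i)) with hgdef
  set ind : Fin k → (Fin k → Bool) → (Fin n → 𝒴) → 𝒰 → ℝ :=
    fun i z y u => if g i y u ≠ z i then 1 else 0 with hinddef
  have hindnn : ∀ i z y u, 0 ≤ ind i z y u := by
    intro i z y u; rw [hinddef]; dsimp only; split <;> norm_num
  have hindle : ∀ i z y u, ind i z y u ≤ 1 := by
    intro i z y u; rw [hinddef]; dsimp only; split <;> norm_num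
  set J : Fin k → 𝒰 → Bool → (Fin n → 𝒴) → ℝ :=
    fun i u b y => ∑ z : Fin k → Bool,
      if z i = b then c * transDist (π u) (paninski k ε z) y else 0 with hJdef
  set δ : Fin k → 𝒰 → ℝ := fun i u => ∑ y, ∑ z : Fin k → Bool,
    c * transDist (π u) (paninski k ε z) y * ind i z y u with hδdef
  have hJnn : ∀ i u b y, 0 ≤ J i u b y := by
    intro i u b y
    apply Finset.sum_nonneg
    intro z _
    split
    · exact mul_nonneg hcnn (hQnn u z y)
    · exact le_refl 0
  have hJmarg : ∀ i u b, ∑ y, J i u b y = 1/2 := by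
    intro i u b
    rw [hJdef]
    dsimp only
    rw [Finset.sum_comm]
    have h1 : ∀ z : Fin k → Bool,
        (∑ y, if z i = b then c * transDist (π u) (paninski k ε z) y else 0)
          = (if z i = b then (1:ℝ) else 0) * c := by
      intro z
      by_cases h : z i = b
      · simp only [h, if_true, one_mul]
        rw [← Finset.mul_sum, hQsum, mul_one]
      · simp [h]
    rw [Finset.sum_congr rfl (fun z _ => h1 z), ← Finset.sum_mul, count_fixed,
      two_pow_half hk]
  have hfano : ∀ i u, 1 - binEnt (δ i u) ≤ miBits (coordJoint
      (fun z y => c * transDist (π u) (paninski k ε z) y) i) := by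
    intro i u
    have hfg := fano (J i u) (fun y => g i y u) (hJnn i u) (hJmarg i u)
    have hδeq : ∑ y, J i u (!(g i y u)) y = δ i u := by
      rw [hδdef, hJdef]
      dsimp only
      apply Finset.sum_congr rfl
      intro y _
      apply Finset.sum_congr rfl
      intro z _
      rw [bool_ind (z i) (g i y u) (c * transDist (π u) (paninski k ε z) y)]
    rw [hδeq] at hfg
    exact hfg
  have hδnn : ∀ i u, 0 ≤ δ i u := by
    intro i u
    rw [hδdef]
    apply Finset.sum_nonneg; intro y _
    apply Finset.sum_nonneg; intro z _
    exact mul_nonneg (mul_nonneg hcnn (hQnn u z y)) (hindnn i z y u)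
  have hcsum : ∑ _z : Fin k → Bool, c = 1 := by
    rw [Finset.sum_const, Finset.card_univ, Fintype.card_fun, Fintype.card_bool,
      Fintype.card_fin, nsmul_eq_mul, hc]
    push_cast
    rw [mul_one_div, div_self (by positivity)]
  have hδle1 : ∀ i u, δ i u ≤ 1 := by
    intro i u
    rw [hδdef]
    dsimp only
    calc ∑ y, ∑ z : Fin k → Bool, c * transDist (π u) (paninski k ε z) y * ind i z y u
        ≤ ∑ y, ∑ z : Fin k → Bool, c * transDist (π u) (paninski k ε z) y := by
          apply Finset.sum_le_sum; intro y _
          apply Finset.sum_le_sum; intro z _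
          have := mul_le_mul_of_nonneg_left (hindle i z y u)
            (mul_nonneg hcnn (hQnn u z y))
          simpa using this
      _ = ∑ z : Fin k → Bool, c := by
          rw [Finset.sum_comm]
          apply Finset.sum_congr rfl
          intro z _
          rw [← Finset.mul_sum, hQsum, mul_one]
      _ = 1 := hcsum
  -- pointwise error-count bound
  have hS : ∀ z y u, (∑ i, ind i z y u) ≤
      (k:ℝ) * (if ε / 12 < tvDist (est y u) (paninski k ε z) then 1 else 0) + k/12 := by
    intro z y u
    by_cases hb : ε / 12 < tvDist (est y u) (paninski k ε z)
    · rw [if_pos hb, mul_one]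
      calc (∑ i, ind i z y u) ≤ ∑ _i : Fin k, (1:ℝ) :=
            Finset.sum_le_sum (fun i _ => hindle i z y u)
        _ = k := by rw [Finset.sum_const, Finset.card_univ, Fintype.card_fin, nsmul_eq_mul, mul_one]
        _ ≤ k + k/12 := by linarith
    · rw [if_neg hb, mul_zero, zero_add]
      push_neg at hb
      have key : ∑ i, (2 * ε / k) * ind i z y u ≤
          ∑ x, |est y u x - paninski k ε z x| := by
        rw [sum_pairs (fun x => |est y u x - paninski k ε z x|)]
        apply Finset.sum_le_sum
        intro i _
        by_cases hw : g i y u ≠ z i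
        · have h1 : ind i z y u = 1 := by rw [hinddef]; simp [hw]
          rw [h1, mul_one]
          exact decode_pay hk hε (est y u) z i (by rw [hgdef] at hw; exact hw)
        · have h1 : ind i z y u = 0 := by rw [hinddef]; simp only; rw [if_neg hw]
          rw [h1, mul_zero]
          positivity
      have htv : ∑ x, |est y u x - paninski k ε z x| =
          2 * tvDist (est y u) (paninski k ε z) := by rw [tvDist]; ring
      rw [← Finset.mul_sum] at key
      have h2 : (2 * ε / k) * (∑ i, ind i z y u) ≤ ε / 6 := by
        rw [htv] at key; linarith
      have h3 : (0:ℝ) ≤ k / (2 * ε) := by positivity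
      have h4 := mul_le_mul_of_nonneg_left h2 h3
      have h5 : ((k:ℝ) / (2*ε)) * ((2 * ε / k) * (∑ i, ind i z y u)) = ∑ i, ind i z y u := by
        have hmm : (k:ℝ)/(2*ε) * (2*ε/(k:ℝ)) = 1 := by field_simp
        rw [← mul_assoc, hmm, one_mul]
      have h6 : (k / (2*ε)) * (ε / 6) = (k:ℝ)/12 := by
        field_simp; ring
      rw [h5, h6] at h4
      exact h4
  -- total error bound
  have hswap : ∑ i : Fin k, ∑ u, μ u * δ i u =
      ∑ z : Fin k → Bool, c * (∑ u, ∑ y, μ u *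
        (transDist (π u) (paninski k ε z) y * (∑ i, ind i z y u))) := by
    have hL : ∀ u, ∑ i, δ i u = ∑ y, ∑ z : Fin k → Bool,
        c * transDist (π u) (paninski k ε z) y * (∑ i, ind i z y u) := by
      intro u
      rw [hδdef]
      dsimp only
      rw [Finset.sum_comm]
      refine Finset.sum_congr rfl (fun y _ => ?_)
      rw [Finset.sum_comm]
      refine Finset.sum_congr rfl (fun z _ => ?_)
      rw [Finset.mul_sum]
    calc ∑ i : Fin k, ∑ u, μ u * δ i u
        = ∑ u, μ u * ∑ i, δ i u := by
          rw [Finset.sum_comm]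
          exact Finset.sum_congr rfl (fun u _ => (Finset.mul_sum _ _ _).symm)
      _ = ∑ u, ∑ y, ∑ z : Fin k → Bool, μ u *
            (c * transDist (π u) (paninski k ε z) y * (∑ i, ind i z y u)) := by
          refine Finset.sum_congr rfl (fun u _ => ?_)
          rw [hL u, Finset.mul_sum]
          refine Finset.sum_congr rfl (fun y _ => ?_)
          rw [Finset.mul_sum]
      _ = ∑ u, ∑ z : Fin k → Bool, ∑ y, μ u *
            (c * transDist (π u) (paninski k ε z) y * (∑ i, ind i z y u)) :=
          Finset.sum_congr rfl (fun u _ => Finset.sum_comm)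
      _ = ∑ z : Fin k → Bool, ∑ u, ∑ y, μ u *
            (c * transDist (π u) (paninski k ε z) y * (∑ i, ind i z y u)) :=
          Finset.sum_comm
      _ = ∑ z : Fin k → Bool, c * (∑ u, ∑ y, μ u *
            (transDist (π u) (paninski k ε z) y * (∑ i, ind i z y u))) := by
          refine Finset.sum_congr rfl (fun z _ => ?_)
          rw [Finset.mul_sum]
          refine Finset.sum_congr rfl (fun u _ => ?_)
          rw [Finset.mul_sum]
          refine Finset.sum_congr rfl (fun y _ => ?_)
          ring
  have hE : ∑ i : Fin k, ∑ u, μ u * δ i u ≤ 7/75 * (k:ℝ) := by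
    rw [hswap]
    have hbound : ∀ z : Fin k → Bool, (∑ u, ∑ y, μ u *
        (transDist (π u) (paninski k ε z) y * (∑ i, ind i z y u)))
        ≤ (k:ℝ) * (1/100) + k/12 := by
      intro z
      calc ∑ u, ∑ y, μ u * (transDist (π u) (paninski k ε z) y * (∑ i, ind i z y u))
          ≤ ∑ u, ∑ y, μ u * (transDist (π u) (paninski k ε z) y *
              ((k:ℝ) * (if ε / 12 < tvDist (est y u) (paninski k ε z) then 1 else 0) + k/12)) := by
            refine Finset.sum_le_sum (fun u _ => Finset.sum_le_sum (fun y _ => ?_))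
            exact mul_le_mul_of_nonneg_left
              (mul_le_mul_of_nonneg_left (hS z y u) (hQnn u z y)) (hμ.1 u)
        _ = (k:ℝ) * (∑ u, ∑ y, μ u * (transDist (π u) (paninski k ε z) y *
              (if ε / 12 < tvDist (est y u) (paninski k ε z) then 1 else 0)))
            + (k/12) * (∑ u, ∑ y, μ u * transDist (π u) (paninski k ε z) y) := by
            rw [Finset.mul_sum, Finset.mul_sum, ← Finset.sum_add_distrib]
            refine Finset.sum_congr rfl (fun u _ => ?_)
            rw [Finset.mul_sum, Finset.mul_sum, ← Finset.sum_add_distrib]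
            refine Finset.sum_congr rfl (fun y _ => ?_)
            ring
        _ ≤ (k:ℝ) * (1/100) + k/12 := by
            have h1 := hacc (paninski k ε z) (hpan z)
            have h2 : ∑ u, ∑ y, μ u * transDist (π u) (paninski k ε z) y = 1 := by
              have : ∀ u, ∑ y, μ u * transDist (π u) (paninski k ε z) y = μ u := by
                intro u
                rw [← Finset.mul_sum, hQsum, mul_one]
              rw [Finset.sum_congr rfl (fun u _ => this u), hμ.2]
            rw [h2, mul_one]
            have h3 := mul_le_mul_of_nonneg_left h1 hk0.le
            linarith
    calc ∑ z : Fin k → Bool, c * (∑ u, ∑ y, μ u *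
          (transDist (π u) (paninski k ε z) y * (∑ i, ind i z y u)))
        ≤ ∑ z : Fin k → Bool, c * ((k:ℝ) * (1/100) + k/12) :=
          Finset.sum_le_sum (fun z _ => mul_le_mul_of_nonneg_left (hbound z) hcnn)
      _ = (∑ _z : Fin k → Bool, c) * ((k:ℝ) * (1/100) + k/12) := by
          rw [Finset.sum_mul]
      _ = (k:ℝ) * (1/100) + k/12 := by rw [hcsum, one_mul]
      _ = 7/75 * (k:ℝ) := by ring
  -- Jensen over (i, u)
  have hW : ∑ p : Fin k × 𝒰, μ p.2 / k = 1 := by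
    rw [Fintype.sum_prod_type]
    have h1 : ∀ i : Fin k, ∑ u, μ u / (k:ℝ) = 1/k := by
      intro i
      rw [← Finset.sum_div, hμ.2]
    rw [Finset.sum_congr rfl (fun i _ => h1 i), Finset.sum_const, Finset.card_univ,
      Fintype.card_fin, nsmul_eq_mul]
    field_simp
  have hjen : ∑ p : Fin k × 𝒰, (μ p.2 / k) * binEnt (δ p.1 p.2)
      ≤ binEnt (∑ p : Fin k × 𝒰, (μ p.2 / k) * δ p.1 p.2) := by
    have h := binEnt_concave.le_map_sum (t := Finset.univ)
      (w := fun p : Fin k × 𝒰 => μ p.2 / k) (p := fun p : Fin k × 𝒰 => δ p.1 p.2)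
      (fun p _ => div_nonneg (hμ.1 p.2) hk0.le) hW
      (fun p _ => ⟨hδnn p.1 p.2, hδle1 p.1 p.2⟩)
    simpa [smul_eq_mul] using h
  have hmean : ∑ p : Fin k × 𝒰, (μ p.2 / k) * δ p.1 p.2
      = (∑ i : Fin k, ∑ u, μ u * δ i u) / k := by
    rw [Fintype.sum_prod_type, Finset.sum_div]
    refine Finset.sum_congr rfl (fun i _ => ?_)
    rw [Finset.sum_div]
    refine Finset.sum_congr rfl (fun u _ => ?_)
    ring
  have hδsum_nn : 0 ≤ ∑ i : Fin k, ∑ u, μ u * δ i u :=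
    Finset.sum_nonneg (fun i _ => Finset.sum_nonneg
      (fun u _ => mul_nonneg (hμ.1 u) (hδnn i u)))
  have hmle : (∑ i : Fin k, ∑ u, μ u * δ i u) / k ≤ 7/75 := by
    rw [div_le_iff₀ hk0]
    linarith
  have hm0 : 0 ≤ (∑ i : Fin k, ∑ u, μ u * δ i u) / k := div_nonneg hδsum_nn hk0.le
  have hbe : binEnt ((∑ i : Fin k, ∑ u, μ u * δ i u) / k) ≤ 1/2 :=
    le_trans (binEnt_mono hm0 hmle (by norm_num)) binEnt_7_75
  have hsum_be : ∑ i : Fin k, ∑ u, μ u * binEnt (δ i u) ≤ (k:ℝ) * (1/2) := by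
    have h1 : ∑ i : Fin k, ∑ u, μ u * binEnt (δ i u)
        = (k:ℝ) * ∑ p : Fin k × 𝒰, (μ p.2 / k) * binEnt (δ p.1 p.2) := by
      rw [Fintype.sum_prod_type, Finset.mul_sum]
      refine Finset.sum_congr rfl (fun i _ => ?_)
      rw [Finset.mul_sum]
      refine Finset.sum_congr rfl (fun u _ => ?_)
      field_simp
    rw [h1]
    calc (k:ℝ) * ∑ p : Fin k × 𝒰, (μ p.2 / k) * binEnt (δ p.1 p.2)
        ≤ (k:ℝ) * binEnt (∑ p : Fin k × 𝒰, (μ p.2 / k) * δ p.1 p.2) :=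
          mul_le_mul_of_nonneg_left hjen hk0.le
      _ = (k:ℝ) * binEnt ((∑ i : Fin k, ∑ u, μ u * δ i u) / k) := by rw [hmean]
      _ ≤ (k:ℝ) * (1/2) := mul_le_mul_of_nonneg_left hbe hk0.le
  -- put everything together
  have hfinal : ∑ i : Fin k, ∑ u, μ u * (1 - binEnt (δ i u))
      ≤ ∑ i : Fin k, ∑ u, μ u * miBits (coordJoint
        (fun z y => c * transDist (π u) (paninski k ε z) y) i) :=
    Finset.sum_le_sum (fun i _ => Finset.sum_le_sum
      (fun u _ => mul_le_mul_of_nonneg_left (hfano i u) (hμ.1 u)))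
  have hsplit : ∑ i : Fin k, ∑ u, μ u * (1 - binEnt (δ i u))
      = (k:ℝ) - ∑ i : Fin k, ∑ u, μ u * binEnt (δ i u) := by
    have h1 : ∀ i, ∑ u, μ u * (1 - binEnt (δ i u))
        = 1 - ∑ u, μ u * binEnt (δ i u) := by
      intro i
      calc ∑ u, μ u * (1 - binEnt (δ i u))
          = ∑ u, (μ u - μ u * binEnt (δ i u)) :=
            Finset.sum_congr rfl (fun u _ => by ring)
        _ = (∑ u, μ u) - ∑ u, μ u * binEnt (δ i u) := Finset.sum_sub_distrib _ _
        _ = 1 - ∑ u, μ u * binEnt (δ i u) := by rw [hμ.2]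
    rw [Finset.sum_congr rfl (fun i _ => h1 i), Finset.sum_sub_distrib,
      Finset.sum_const, Finset.card_univ, Fintype.card_fin, nsmul_eq_mul, mul_one]
  calc (k:ℝ)/2 ≤ (k:ℝ) - ∑ i : Fin k, ∑ u, μ u * binEnt (δ i u) := by linarith
    _ = ∑ i : Fin k, ∑ u, μ u * (1 - binEnt (δ i u)) := hsplit.symm
    _ ≤ _ := hfinal
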